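/- Let G be a group, let σ, τ : G → G be group homomorphisms (extended to algebra endomorphisms of ℂ[G]), let A be a sub-ℂ[G]-bimodule of the convolution bimodule of functions G → ℂ with A ⊆ ℓ^∞(G), let N be a norm on A with sup_{u∈G} |a(u)| ≤ C·N(a) for all a ∈ A and some constant C > 0. If d : ℂ[G] → A is a (σ,τ)-derivation which is bounded from the supremum norm to N (there exists M with N(d x) ≤ M·‖x‖_s for all x ∈ ℂ[G]), then d is (σ,τ)-quasi-inner: (d δ_t)(g·σ(t)) = 0 for all g, t ∈ G with τ(t)·g = g·σ(t). -/

import Mathlib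

/-- Left action of the group ring `ℂ[G]` on functions `G → ℂ` by convolution. -/
noncomputable def convL (G : Type*) [Group G] (x : MonoidAlgebra ℂ G) (f : G → ℂ) : G → ℂ :=
  fun u => ∑ g ∈ x.coeff.support, x.coeff g * f (g⁻¹ * u)

/-- Right action of the group ring `ℂ[G]` on functions `G → ℂ` by convolution. -/
noncomputable def convR (G : Type*) [Group G] (f : G → ℂ) (x : MonoidAlgebra ℂ G) : G → ℂ :=
  fun u => ∑ g ∈ x.coeff.support, f (u * g⁻¹) * x.coeff g

/-- The supremum norm on the group ring `ℂ[G]`. -/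
noncomputable def supNorm {G : Type*} [Group G] (x : MonoidAlgebra ℂ G) : ℝ :=
  ⨆ g, ‖x.coeff g‖

/-- The extension of a group homomorphism `σ : G → G` to an algebra endomorphism of
`ℂ[G]`, determined by `σ(δ_g) = δ_{σ g}`. -/
noncomputable def extendHom {G : Type*} [Group G] (σ : G →* G) :
    MonoidAlgebra ℂ G → MonoidAlgebra ℂ G :=
  fun x => MonoidAlgebra.ofCoeff (Finsupp.mapDomain σ x.coeff)


lemma convR_single {G : Type*} [Group G] (f : G → ℂ) (s u : G) :
    convR G f (MonoidAlgebra.single s 1) u = f (u * s⁻¹) := by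
  simp [convR, MonoidAlgebra.coeff_single, Finsupp.support_single_ne_zero s (one_ne_zero)]

lemma convL_single {G : Type*} [Group G] (f : G → ℂ) (s u : G) :
    convL G (MonoidAlgebra.single s 1) f u = f (s⁻¹ * u) := by
  simp [convL, MonoidAlgebra.coeff_single, Finsupp.support_single_ne_zero s (one_ne_zero)]

lemma extendHom_single {G : Type*} [Group G] (σ : G →* G) (s : G) :
    extendHom σ (MonoidAlgebra.single s (1:ℂ)) = MonoidAlgebra.single (σ s) 1 := by
  unfold extendHom
  rw [MonoidAlgebra.coeff_single, Finsupp.mapDomain_single, MonoidAlgebra.ofCoeff_single]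

lemma supNorm_single {G : Type*} [Group G] (s : G) :
    supNorm (MonoidAlgebra.single s (1:ℂ)) = 1 := by
  unfold supNorm
  apply le_antisymm
  · apply ciSup_le
    intro u
    classical
    rw [MonoidAlgebra.coeff_single, Finsupp.single_apply]
    split_ifs <;> simp
  · have hb : BddAbove (Set.range fun u => ‖(MonoidAlgebra.single s (1:ℂ)).coeff u‖) := by
      refine ⟨1, ?_⟩
      rintro _ ⟨u, rfl⟩
      classical
      simp only [MonoidAlgebra.coeff_single, Finsupp.single_apply]
      split_ifs <;> simp
    have := le_ciSup hb s
    simpa [MonoidAlgebra.coeff_single] using this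

/-- If `A` is a sub-`ℂ[G]`-bimodule of the convolution bimodule of functions `G → ℂ`
with `A ⊆ ℓ^∞(G)`, `N` is a norm on `A` subordinate to the supremum norm, and
`d : ℂ[G] → A` is a `(σ,τ)`-derivation bounded from the supremum norm to `N`, then `d`
is `(σ,τ)`-quasi-inner: `(d δ_t)(g*σ(t)) = 0` whenever `τ(t)*g = g*σ(t)`. -/
theorem sigma_tau_derivation_into_subordinate_bimodule_quasiInner
    (G : Type*) [Group G] (σ τ : G →* G) (A : Submodule ℂ (G → ℂ))
    -- A is closed under the left and right ℂ[G]-actions (a sub-bimodule)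
    (hAL : ∀ (x : MonoidAlgebra ℂ G) (a : G → ℂ), a ∈ A → convL G x a ∈ A)
    (hAR : ∀ (x : MonoidAlgebra ℂ G) (a : G → ℂ), a ∈ A → convR G a x ∈ A)
    -- every element of A is a bounded function (A ⊆ ℓ^∞(G))
    (hAbdd : ∀ a ∈ A, ∃ B : ℝ, ∀ u : G, ‖a u‖ ≤ B)
    -- N is a norm on A
    (N : (G → ℂ) → ℝ)
    (hN_nonneg : ∀ a ∈ A, 0 ≤ N a)
    (hN_eq_zero : ∀ a ∈ A, (N a = 0 ↔ a = 0))
    (hN_add : ∀ a ∈ A, ∀ b ∈ A, N (a + b) ≤ N a + N b)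
    (hN_smul : ∀ (c : ℂ), ∀ a ∈ A, N (c • a) = ‖c‖ * N a)
    -- N is subordinate to the supremum norm
    (C : ℝ) (hC : 0 < C)
    (hsub : ∀ a ∈ A, ∀ u : G, ‖a u‖ ≤ C * N a)
    -- d is a (σ,τ)-derivation ℂ[G] → A
    (d : MonoidAlgebra ℂ G →ₗ[ℂ] (G → ℂ))
    (hrange : ∀ x : MonoidAlgebra ℂ G, d x ∈ A)
    (hder : ∀ x y : MonoidAlgebra ℂ G,
      d (x * y) = convR G (d x) (extendHom σ y) + convL G (extendHom τ x) (d y))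
    -- d is bounded from the supremum norm to N
    (M : ℝ) (hbdd : ∀ x : MonoidAlgebra ℂ G, N (d x) ≤ M * supNorm x) :
    ∀ g t : G, τ t * g = g * σ t → d (MonoidAlgebra.single t (1 : ℂ)) (g * σ t) = 0 := by
  intro g t hcomm
  have hcomm_pow : ∀ n : ℕ, (τ t) ^ n * g = g * (σ t) ^ n := by
    intro n
    induction n with
    | zero => simp
    | succ n ih =>
      calc (τ t) ^ (n+1) * g = τ t * ((τ t) ^ n * g) := by rw [pow_succ']; rw [mul_assoc]
      _ = τ t * (g * (σ t) ^ n) := by rw [ih]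
      _ = (τ t * g) * (σ t) ^ n := by rw [mul_assoc]
      _ = (g * σ t) * (σ t) ^ n := by rw [hcomm]
      _ = g * (σ t) ^ (n+1) := by rw [mul_assoc, ← pow_succ']
  have hd_single : ∀ n : ℕ,
      d (MonoidAlgebra.single (t ^ n) (1:ℂ)) (g * (σ t) ^ n)
        = (n : ℂ) * d (MonoidAlgebra.single t (1:ℂ)) (g * σ t) := by
    intro n
    induction n with
    | zero =>
      have h1 : (MonoidAlgebra.single (t ^ 0) (1:ℂ)) = (1 : MonoidAlgebra ℂ G) := by
        rw [pow_zero, ← MonoidAlgebra.one_def]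
      have hd1 : d (1 : MonoidAlgebra ℂ G) = 0 := by
        have h := hder 1 1
        rw [one_mul] at h
        have e1 : extendHom σ (1 : MonoidAlgebra ℂ G) = MonoidAlgebra.single 1 1 := by
          rw [MonoidAlgebra.one_def, extendHom_single, map_one]
        have e2 : extendHom τ (1 : MonoidAlgebra ℂ G) = MonoidAlgebra.single 1 1 := by
          rw [MonoidAlgebra.one_def, extendHom_single, map_one]
        rw [e1, e2] at h
        funext u
        have hu := congrFun h u
        rw [Pi.add_apply, convR_single, convL_single, inv_one, mul_one, one_mul] at hu
        show d (1 : MonoidAlgebra ℂ G) u = 0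
        linear_combination -hu
      rw [h1, hd1]
      simp
    | succ n ih =>
      have hsplit : (MonoidAlgebra.single (t ^ (n+1)) (1:ℂ))
          = MonoidAlgebra.single (t ^ n) 1 * MonoidAlgebra.single t 1 := by
        rw [MonoidAlgebra.single_mul_single, one_mul, pow_succ]
      rw [hsplit, hder, Pi.add_apply, extendHom_single, extendHom_single, convR_single,
        convL_single]
      have e1 : g * (σ t) ^ (n+1) * (σ t)⁻¹ = g * (σ t) ^ n := by
        rw [pow_succ]; group
      have e2 : (τ (t ^ n))⁻¹ * (g * (σ t) ^ (n+1)) = g * σ t := by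
        have h := hcomm_pow n
        rw [map_pow]
        calc (τ t ^ n)⁻¹ * (g * σ t ^ (n+1))
            = (τ t ^ n)⁻¹ * ((g * σ t ^ n) * σ t) := by rw [pow_succ, mul_assoc]
          _ = (τ t ^ n)⁻¹ * ((τ t ^ n * g) * σ t) := by rw [h]
          _ = g * σ t := by group
      rw [e1, e2, ih]
      push_cast
      ring
  have hbound : ∀ n : ℕ,
      (n : ℝ) * ‖d (MonoidAlgebra.single t (1:ℂ)) (g * σ t)‖ ≤ C * M := by
    intro n
    have h1 := hsub _ (hrange (MonoidAlgebra.single (t ^ n) (1:ℂ))) (g * (σ t) ^ n)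
    rw [hd_single n] at h1
    have h2 := hbdd (MonoidAlgebra.single (t ^ n) (1:ℂ))
    rw [supNorm_single] at h2
    have h3 : ‖(n:ℂ) * d (MonoidAlgebra.single t (1:ℂ)) (g * σ t)‖
        = (n:ℝ) * ‖d (MonoidAlgebra.single t (1:ℂ)) (g * σ t)‖ := by
      rw [norm_mul]; simp
    rw [h3] at h1
    have h4 := mul_le_mul_of_nonneg_left h2 hC.le
    linarith
  by_contra hne
  have hpos : 0 < ‖d (MonoidAlgebra.single t (1:ℂ)) (g * σ t)‖ :=
    norm_pos_iff.mpr hne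
  obtain ⟨n, hn⟩ := exists_nat_gt
    (C * M / ‖d (MonoidAlgebra.single t (1:ℂ)) (g * σ t)‖)
  rw [div_lt_iff₀ hpos] at hn
  have := hbound n
  linarith
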